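/- Let W be a finite set, inv : W → W a map, d ≥ 1 an integer, h : W × W × W → ℤ, and for each w ∈ W let ρ(w) be a d×d matrix with rational entries such that ρ(x)·ρ(y) = Σ_{z∈W} h(x,y,z)·ρ(z) for all x,y ∈ W and h(y, inv(x), z) = h(z, x, y) for all x,y,z ∈ W. Assume the family is irreducible, i.e., the only ℚ-subspaces U ⊆ ℚ^d with ρ(w)·U ⊆ U for all w ∈ W are U = 0 and U = ℚ^d. Then there exists a symmetric d×d integer matrix B which is positive definite (vᵀ·B·v > 0 for every nonzero v ∈ ℚ^d) such that B·ρ(inv(w)) = ρ(w)ᵀ·B for every w ∈ W. -/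

import Mathlib

open Matrix

/-- dot product of a rational vector with itself is nonnegative -/
private lemma aux_dot_self_nonneg {d : ℕ} (u : Fin d → ℚ) : 0 ≤ u ⬝ᵥ u :=
  Finset.sum_nonneg fun i _ => mul_self_nonneg _

private lemma aux_dot_self_pos {d : ℕ} (u : Fin d → ℚ) (hu : u ≠ 0) : 0 < u ⬝ᵥ u := by
  obtain ⟨i, hi⟩ := Function.ne_iff.mp hu
  exact Finset.sum_pos' (fun j _ => mul_self_nonneg _)
    ⟨i, Finset.mem_univ _, mul_self_pos.mpr hi⟩

/-- a finite sum of matrices acts on a vector as the sum of the actions -/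
private lemma aux_sum_mulVec {d : ℕ} {ι : Type*} (s : Finset ι)
    (A : ι → Matrix (Fin d) (Fin d) ℚ) (v : Fin d → ℚ) :
    (∑ i ∈ s, A i) *ᵥ v = ∑ i ∈ s, A i *ᵥ v := by
  ext j
  simp only [Matrix.mulVec, dotProduct, Matrix.sum_apply, Finset.sum_apply,
    Finset.sum_mul]
  rw [Finset.sum_comm]

/-- dot product with a finite sum of vectors -/
private lemma aux_dot_sum {d : ℕ} {ι : Type*} (s : Finset ι)
    (v : Fin d → ℚ) (u : ι → Fin d → ℚ) :
    v ⬝ᵥ (∑ i ∈ s, u i) = ∑ i ∈ s, v ⬝ᵥ u i := by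
  simp only [dotProduct, Finset.sum_apply, Finset.mul_sum]
  rw [Finset.sum_comm]

/-- quadratic form of `Aᵀ * A` -/
private lemma aux_quad {d : ℕ} (A : Matrix (Fin d) (Fin d) ℚ) (v : Fin d → ℚ) :
    v ⬝ᵥ ((Aᵀ * A) *ᵥ v) = (A *ᵥ v) ⬝ᵥ (A *ᵥ v) := by
  rw [← Matrix.mulVec_mulVec, Matrix.dotProduct_mulVec, Matrix.vecMul_transpose]

/-- clearing denominators -/
private lemma aux_num_cast (q : ℚ) (N : ℕ) (hdvd : q.den ∣ N) :
    ((((N : ℚ) * q).num : ℤ) : ℚ) = (N : ℚ) * q := by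
  obtain ⟨k, hk⟩ := hdvd
  have hden : (q.den : ℚ) ≠ 0 := by exact_mod_cast q.den_ne_zero
  have h1 : (N : ℚ) * q = ((k * q.num : ℤ) : ℚ) := by
    have hNq : (N : ℚ) = (q.den : ℚ) * (k : ℚ) := by exact_mod_cast hk
    have hdq : (q.den : ℚ) * q = (q.num : ℚ) := Rat.den_mul_eq_num q
    calc (N : ℚ) * q = (k : ℚ) * ((q.den : ℚ) * q) := by rw [hNq]; ring
      _ = (k : ℚ) * (q.num : ℚ) := by rw [hdq]
      _ = ((k * q.num : ℤ) : ℚ) := by push_cast; ring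
  rw [h1, Rat.num_intCast]

theorem stmt_1 (W : Type) [Fintype W] (inv : W → W)
    (d : ℕ) (hd : 1 ≤ d) (h : W × W × W → ℤ)
    (ρ : W → Matrix (Fin d) (Fin d) ℚ)
    (hmul : ∀ x y : W, ρ x * ρ y = ∑ z : W, (h (x, y, z) : ℚ) • ρ z)
    (hsym : ∀ x y z : W, h (y, inv x, z) = h (z, x, y))
    (hirr : ∀ U : Submodule ℚ (Fin d → ℚ),
      (∀ w : W, ∀ u ∈ U, (ρ w) *ᵥ u ∈ U) → U = ⊥ ∨ U = ⊤) :
    ∃ B : Matrix (Fin d) (Fin d) ℤ, B.IsSymm ∧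
      (∀ v : Fin d → ℚ, v ≠ 0 →
        0 < dotProduct v ((B.map (Int.cast : ℤ → ℚ)) *ᵥ v)) ∧
      (∀ w : W, (B.map (Int.cast : ℤ → ℚ)) * ρ (inv w) =
        (ρ w)ᵀ * (B.map (Int.cast : ℤ → ℚ))) := by
  classical
  set B₀ : Matrix (Fin d) (Fin d) ℚ := ∑ x : W, (ρ x)ᵀ * ρ x with hB₀
  -- quadratic form identity
  have hquad : ∀ v : Fin d → ℚ, v ⬝ᵥ (B₀ *ᵥ v) = ∑ x : W, (ρ x *ᵥ v) ⬝ᵥ (ρ x *ᵥ v) := by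
    intro v
    rw [hB₀, aux_sum_mulVec, aux_dot_sum]
    exact Finset.sum_congr rfl fun x _ => aux_quad (ρ x) v
  -- the common kernel is invariant
  set K : Submodule ℚ (Fin d → ℚ) := ⨅ x : W, LinearMap.ker ((ρ x).mulVecLin) with hK
  have hKmem : ∀ v, v ∈ K ↔ ∀ x, ρ x *ᵥ v = 0 := by
    intro v
    simp [hK, Submodule.mem_iInf, Matrix.mulVecLin_apply, LinearMap.mem_ker]
  have hKinv : ∀ w : W, ∀ u ∈ K, ρ w *ᵥ u ∈ K := by
    intro w u hu
    rw [hKmem] at hu ⊢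
    intro x
    rw [Matrix.mulVec_mulVec, hmul, aux_sum_mulVec]
    refine Finset.sum_eq_zero fun z _ => ?_
    rw [Matrix.smul_mulVec, hu z, smul_zero]
  rcases hirr K hKinv with hKbot | hKtop
  · -- main case: B₀ is positive definite
    -- symmetry
    have hB₀symm : B₀ᵀ = B₀ := by
      rw [hB₀, Matrix.transpose_sum]
      exact Finset.sum_congr rfl fun x _ => by
        rw [Matrix.transpose_mul, Matrix.transpose_transpose]
    -- positive definiteness
    have hB₀pos : ∀ v : Fin d → ℚ, v ≠ 0 → 0 < v ⬝ᵥ (B₀ *ᵥ v) := by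
      intro v hv
      rw [hquad]
      have hvK : v ∉ K := by rw [hKbot]; simpa using hv
      rw [hKmem] at hvK
      push_neg at hvK
      obtain ⟨x, hx⟩ := hvK
      exact Finset.sum_pos' (fun y _ => aux_dot_self_nonneg _)
        ⟨x, Finset.mem_univ _, aux_dot_self_pos _ hx⟩
    -- covariance
    have hcomm : ∀ w : W, B₀ * ρ (inv w) = (ρ w)ᵀ * B₀ := by
      intro w
      have L : B₀ * ρ (inv w)
          = ∑ x : W, ∑ z : W, (h (z, w, x) : ℚ) • ((ρ x)ᵀ * ρ z) := by
        rw [hB₀, Finset.sum_mul]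
        refine Finset.sum_congr rfl fun x _ => ?_
        rw [Matrix.mul_assoc, hmul, Finset.mul_sum]
        refine Finset.sum_congr rfl fun z _ => ?_
        rw [hsym w x z, Matrix.mul_smul]
      have R : (ρ w)ᵀ * B₀
          = ∑ x : W, ∑ z : W, (h (x, w, z) : ℚ) • ((ρ z)ᵀ * ρ x) := by
        rw [hB₀, Finset.mul_sum]
        refine Finset.sum_congr rfl fun x _ => ?_
        rw [← Matrix.mul_assoc, ← Matrix.transpose_mul, hmul, Matrix.transpose_sum,
          Finset.sum_mul]
        refine Finset.sum_congr rfl fun z _ => ?_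
        rw [Matrix.transpose_smul, Matrix.smul_mul]
      rw [L, R]
      exact Finset.sum_comm
    -- clear denominators
    set N : ℕ := ∏ p : Fin d × Fin d, (B₀ p.1 p.2).den with hN
    have hNpos : 0 < N := Finset.prod_pos fun p _ => (B₀ p.1 p.2).pos
    have hdvd : ∀ i j : Fin d, (B₀ i j).den ∣ N := fun i j =>
      Finset.dvd_prod_of_mem (fun p : Fin d × Fin d => (B₀ p.1 p.2).den)
        (Finset.mem_univ (i, j))
    refine ⟨Matrix.of fun i j => ((N : ℚ) * B₀ i j).num, ?_, ?_, ?_⟩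
    · -- symmetry
      ext i j
      simp only [Matrix.IsSymm, Matrix.transpose_apply, Matrix.of_apply]
      congr 1
      have : B₀ j i = B₀ i j := by
        rw [← Matrix.transpose_apply B₀ i j, hB₀symm]
      rw [this]
    · -- positivity
      intro v hv
      have hmap : (Matrix.of fun i j => ((N : ℚ) * B₀ i j).num).map
          (Int.cast : ℤ → ℚ) = (N : ℚ) • B₀ := by
        ext i j
        simp only [Matrix.map_apply, Matrix.of_apply, Matrix.smul_apply, smul_eq_mul]
        exact aux_num_cast _ _ (hdvd i j)
      rw [hmap, Matrix.smul_mulVec, dotProduct_smul, smul_eq_mul]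
      have : (0 : ℚ) < (N : ℚ) := by exact_mod_cast hNpos
      exact mul_pos this (hB₀pos v hv)
    · -- covariance
      intro w
      have hmap : (Matrix.of fun i j => ((N : ℚ) * B₀ i j).num).map
          (Int.cast : ℤ → ℚ) = (N : ℚ) • B₀ := by
        ext i j
        simp only [Matrix.map_apply, Matrix.of_apply, Matrix.smul_apply, smul_eq_mul]
        exact aux_num_cast _ _ (hdvd i j)
      rw [hmap, Matrix.smul_mul, hcomm w, Matrix.mul_smul]
  · -- degenerate case: all ρ x = 0, take B = 1
    have hρ0 : ∀ x : W, ρ x = 0 := by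
      intro x
      have hv0 : ∀ v : Fin d → ℚ, ρ x *ᵥ v = 0 := by
        intro v
        have hv : v ∈ K := hKtop ▸ Submodule.mem_top
        exact (hKmem v).mp hv x
      ext i j
      have := congrFun (hv0 (Pi.single j 1)) i
      simpa using this
    refine ⟨1, Matrix.isSymm_one, ?_, ?_⟩
    · intro v hv
      rw [Matrix.map_one (Int.cast : ℤ → ℚ) Int.cast_zero Int.cast_one,
        Matrix.one_mulVec]
      exact aux_dot_self_pos v hv
    · intro w
      rw [hρ0 (inv w), hρ0 w, Matrix.mul_zero, Matrix.transpose_zero, Matrix.zero_mul]
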